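/- The Koszul braces satisfy the hereditarity property: if Φ_k^Δ vanishes identically on A^⊗k, then Φ_{k+1}^Δ vanishes identically on A^⊗(k+1). -/

import Mathlib

/- STATEMENT 1: the Koszul braces
`Φ_k^Δ(a₁,…,a_k) = Σ_{1≤i≤k} (−1)^{k−i} Σ_σ ε(σ) Δ(a_{σ(1)}⋯a_{σ(i)}) a_{σ(i+1)}⋯a_{σ(k)}`
(σ over (i,k−i)-unshuffles, ε(σ) the Koszul sign) are hereditary: if `Φ_k^Δ` vanishes
identically then so does `Φ_{k+1}^Δ`.

In a graded commutative algebra an `(i,k−i)`-unshuffle is determined by the subset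
`S = {σ(1),…,σ(i)}` of cardinality `i`, and the Koszul sign of the unshuffle moving `S`
to the front is `(−1)^{Σ_{j∈S, l∉S, l<j} d_j d_l}`. -/

/-- ordered product of the entries of `a` indexed by `S` (in increasing index order). -/
noncomputable def prodOn {A : Type} [Ring A] {k : ℕ} (a : Fin k → A) (S : Finset (Fin k)) : A :=
  ((S.sort (· ≤ ·)).map a).prod

/-- Koszul sign of the unshuffle moving `S` to the front, inputs of degrees `d`. -/
noncomputable def koszulSignSet {k : ℕ} (d : Fin k → ℤ) (S : Finset (Fin k)) : ℤ :=
  ((∑ j ∈ S, ∑ l ∈ Sᶜ.filter (fun l => l < j), d j * d l).negOnePow : ℤ)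

/-- The Koszul brace `Φ_k^Δ`, evaluated on homogeneous elements `a` of degrees `d`. -/
noncomputable def koszulBrace {K A : Type} [Field K] [Ring A] [Algebra K A]
    (Δ : A →ₗ[K] A) {k : ℕ} (d : Fin k → ℤ) (a : Fin k → A) : A :=
  ∑ S ∈ Finset.univ.powerset.filter (fun S : Finset (Fin k) => S.Nonempty),
    ((-1 : ℤ) ^ (k - S.card) * koszulSignSet d S) • (Δ (prodOn a S) * prodOn a Sᶜ)

open Finset

section SortLemmas
variable {α : Type*} [LinearOrder α] [DecidableEq α]

omit [DecidableEq α] in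
theorem kb_eq_of_perm_of_sorted {β : Type*} [LinearOrder β] {l₁ l₂ : List β}
    (hp : l₁.Perm l₂) (h₁ : List.Pairwise (· ≤ ·) l₁) (h₂ : List.Pairwise (· ≤ ·) l₂) :
    l₁ = l₂ :=
  List.Perm.eq_of_pairwise' h₁ h₂ hp

theorem kb_sort_insert_max {S : Finset α} {x : α} (hx : ∀ y ∈ S, y < x) :
    (insert x S).sort (· ≤ ·) = S.sort (· ≤ ·) ++ [x] := by
  apply kb_eq_of_perm_of_sorted
  · rw [← Multiset.coe_eq_coe]
    have hxS : x ∉ S := fun hc => lt_irrefl x (hx x hc)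
    rw [Finset.sort_eq, Finset.insert_val, Multiset.ndinsert_of_notMem hxS]
    have : ((S.sort (· ≤ ·) ++ [x] : List α) : Multiset α)
        = (S.sort (· ≤ ·) : Multiset α) + ([x] : List α) := by
      exact_mod_cast rfl
    rw [this, Finset.sort_eq, add_comm]
    rfl
  · exact Finset.pairwise_sort _ _
  · rw [List.pairwise_append]
    refine ⟨Finset.pairwise_sort _ _, List.pairwise_singleton _ x, ?_⟩
    intro a ha b hb
    rw [List.mem_singleton] at hb
    subst hb
    exact (hx a ((Finset.mem_sort _).1 ha)).le

omit [DecidableEq α] in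
theorem kb_sort_map {β : Type*} [LinearOrder β] (f : α ↪o β) (S : Finset α) :
    (S.map f.toEmbedding).sort (· ≤ ·) = (S.sort (· ≤ ·)).map f := by
  apply kb_eq_of_perm_of_sorted
  · rw [← Multiset.coe_eq_coe]
    rw [Finset.sort_eq, Finset.map_val]
    have : ((List.map f (S.sort (· ≤ ·)) : List β) : Multiset β)
        = Multiset.map f ((S.sort (· ≤ ·) : List α) : Multiset α) := by exact_mod_cast rfl
    rw [this, Finset.sort_eq]
    rfl
  · exact Finset.pairwise_sort _ _
  · exact List.Pairwise.map f (fun a b h => f.monotone h) (Finset.pairwise_sort _ _)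

end SortLemmas

section ProdOn
variable {A : Type} [Ring A] {k : ℕ}

theorem prodOn_congr {a b : Fin k → A} {S : Finset (Fin k)} (h : ∀ x ∈ S, a x = b x) :
    prodOn a S = prodOn b S := by
  unfold prodOn
  congr 1
  exact List.map_congr_left (fun x hx => h x ((Finset.mem_sort _).1 hx))

theorem prodOn_empty (a : Fin k → A) : prodOn a ∅ = 1 := by simp [prodOn]

theorem prodOn_insert_max {a : Fin k → A} {S : Finset (Fin k)} {x : Fin k}
    (hx : ∀ y ∈ S, y < x) : prodOn a (insert x S) = prodOn a S * a x := by
  unfold prodOn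
  rw [kb_sort_insert_max hx, List.map_append, List.prod_append]
  simp

theorem prodOn_map {N : ℕ} (f : Fin k ↪o Fin N) (a : Fin N → A) (S : Finset (Fin k)) :
    prodOn a (S.map f.toEmbedding) = prodOn (a ∘ f) S := by
  unfold prodOn
  rw [kb_sort_map, List.map_map]

theorem prodOn_split_last {n : ℕ} (a : Fin (n+1) → A) {T : Finset (Fin (n+1))}
    (h : Fin.last n ∈ T) :
    prodOn a T = prodOn a (T.erase (Fin.last n)) * a (Fin.last n) := by
  conv_lhs => rw [← Finset.insert_erase h]
  exact prodOn_insert_max (fun y hy =>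
    lt_of_le_of_ne (Fin.le_last y) (Finset.ne_of_mem_erase hy))

end ProdOn

section MapSA
variable {n : ℕ}

/-- mapping a subset of `Fin n` into `Fin (n+1)` by `succAbove r`. -/
def mapSA (r : Fin (n+1)) (S : Finset (Fin n)) : Finset (Fin (n+1)) :=
  S.map (r.succAboveOrderEmb).toEmbedding

theorem mem_mapSA {r : Fin (n+1)} {S : Finset (Fin n)} {x : Fin (n+1)} :
    x ∈ mapSA r S ↔ ∃ y ∈ S, r.succAbove y = x := by
  simp [mapSA, Finset.mem_map]
  exact Iff.rfl

theorem mapSA_mem {r : Fin (n+1)} {S : Finset (Fin n)} {y : Fin n} :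
    r.succAbove y ∈ mapSA r S ↔ y ∈ S := by
  rw [mem_mapSA]
  constructor
  · rintro ⟨z, hz, hzy⟩
    rwa [← Fin.succAbove_right_inj.1 hzy]
  · exact fun hy => ⟨y, hy, rfl⟩

theorem not_mem_mapSA (r : Fin (n+1)) (S : Finset (Fin n)) : r ∉ mapSA r S := by
  rw [mem_mapSA]
  rintro ⟨y, -, hy⟩
  exact Fin.succAbove_ne r y hy

theorem card_mapSA (r : Fin (n+1)) (S : Finset (Fin n)) : (mapSA r S).card = S.card :=
  Finset.card_map _

theorem compl_mapSA (r : Fin (n+1)) (S : Finset (Fin n)) :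
    (mapSA r S)ᶜ = insert r (mapSA r Sᶜ) := by
  ext x
  rcases eq_or_ne x r with rfl | hx
  · simp [not_mem_mapSA]
  · obtain ⟨y, rfl⟩ := Fin.exists_succAbove_eq hx
    simp [Finset.mem_insert, mapSA_mem, (Fin.succAbove_ne r y)]

theorem compl_insert_mapSA (r : Fin (n+1)) (S : Finset (Fin n)) :
    (insert r (mapSA r S))ᶜ = mapSA r Sᶜ := by
  have := congrArg (·ᶜ) (compl_mapSA r Sᶜ)
  simpa using this.symm

theorem prodOn_mapSA {A : Type} [Ring A] (r : Fin (n+1)) (a : Fin (n+1) → A)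
    (S : Finset (Fin n)) : prodOn a (mapSA r S) = prodOn (a ∘ r.succAbove) S := by
  rw [mapSA, prodOn_map]
  rfl

end MapSA

section Esum
variable {n : ℕ}

/-- the exponent of the Koszul sign. -/
def esum {m : ℕ} (d : Fin m → ℤ) (S : Finset (Fin m)) : ℤ :=
  ∑ j ∈ S, ∑ l ∈ Sᶜ.filter (fun l => l < j), d j * d l

theorem koszulSignSet_esum {m : ℕ} (d : Fin m → ℤ) (S : Finset (Fin m)) :
    koszulSignSet d S = ((esum d S).negOnePow : ℤ) := rfl

theorem inner_mapSA (r : Fin (n+1)) (d : Fin (n+1) → ℤ) (t : Fin n) (C : Finset (Fin n)) :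
    ∑ l ∈ (mapSA r C).filter (fun l => l < r.succAbove t), d (r.succAbove t) * d l
      = ∑ l ∈ C.filter (fun l => l < t), d (r.succAbove t) * d (r.succAbove l) := by
  rw [mapSA, Finset.filter_map, Finset.sum_map]
  apply Finset.sum_congr
  · apply Finset.filter_congr
    intro l _
    simp [Function.comp, Fin.succAbove_lt_succAbove_iff]
    exact Fin.succAbove_lt_succAbove_iff
  · intros
    rfl

theorem esum_mapSA (r : Fin (n+1)) (d : Fin (n+1) → ℤ) (T : Finset (Fin n)) :
    esum d (mapSA r T)
      = (∑ t ∈ T.filter (fun t => r < r.succAbove t), d (r.succAbove t) * d r)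
        + esum (d ∘ r.succAbove) T := by
  unfold esum
  rw [show (mapSA r T)ᶜ = insert r (mapSA r Tᶜ) from compl_mapSA r T]
  rw [mapSA, Finset.sum_map]
  have step : ∀ t ∈ T,
      (∑ l ∈ ((insert r (mapSA r Tᶜ)).filter
          (fun l => l < (r.succAboveOrderEmb).toEmbedding t)),
        d ((r.succAboveOrderEmb).toEmbedding t) * d l)
      = (if r < r.succAbove t then d (r.succAbove t) * d r else 0)
        + ∑ l ∈ Tᶜ.filter (fun l => l < t), d (r.succAbove t) * d (r.succAbove l) := by
    intro t _
    have hemb : (r.succAboveOrderEmb).toEmbedding t = r.succAbove t := rfl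
    rw [hemb, Finset.filter_insert]
    by_cases hrt : r < r.succAbove t
    · rw [if_pos hrt, if_pos hrt, Finset.sum_insert (by
        rw [Finset.mem_filter]
        rintro ⟨hc, -⟩
        exact not_mem_mapSA r Tᶜ hc), inner_mapSA]
    · rw [if_neg hrt, if_neg hrt, inner_mapSA, zero_add]
  rw [Finset.sum_congr rfl step, Finset.sum_add_distrib, ← Finset.sum_filter]
  rfl

theorem esum_insert_lastSA (d : Fin (n+1) → ℤ) (T : Finset (Fin n)) :
    esum d (insert (Fin.last n) (mapSA (Fin.last n) T))
      = (∑ l ∈ Tᶜ, d (Fin.last n) * d ((Fin.last n).succAbove l))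
        + esum (d ∘ (Fin.last n).succAbove) T := by
  unfold esum
  rw [Finset.sum_insert (not_mem_mapSA _ T), compl_insert_mapSA]
  congr 1
  · rw [Finset.filter_true_of_mem (fun x hx => by
      obtain ⟨y, -, rfl⟩ := mem_mapSA.1 hx
      rw [Fin.succAbove_last]
      exact Fin.castSucc_lt_last y)]
    rw [mapSA, Finset.sum_map]
    rfl
  · rw [mapSA, Finset.sum_map]
    exact Finset.sum_congr rfl (fun t _ => inner_mapSA (Fin.last n) d t Tᶜ)

theorem esum_split_last (d : Fin (n+1) → ℤ) {T : Finset (Fin (n+1))} (h : Fin.last n ∈ T) :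
    esum d T = (∑ l ∈ Tᶜ, d (Fin.last n) * d l) + esum d (T.erase (Fin.last n)) := by
  unfold esum
  rw [← Finset.sum_erase_add T _ h, add_comm]
  congr 1
  · rw [Finset.filter_true_of_mem (fun l hl => by
      have : l ≠ Fin.last n := fun hc => (Finset.mem_compl.1 hl) (hc ▸ h)
      exact Fin.lt_last_iff_ne_last.2 this)]
  · apply Finset.sum_congr rfl
    intro j hj
    have hjl : j < Fin.last n :=
      Fin.lt_last_iff_ne_last.2 (Finset.ne_of_mem_erase hj)
    congr 1
    rw [Finset.compl_erase, Finset.filter_insert, if_neg (by exact fun hc => absurd (lt_trans hc hjl) (lt_irrefl _) )]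

theorem esum_congr_off_last {d₁ d₂ : Fin (n+1) → ℤ} (h : ∀ j, j ≠ Fin.last n → d₁ j = d₂ j)
    {T : Finset (Fin (n+1))} (hT : Fin.last n ∉ T) : esum d₁ T = esum d₂ T := by
  unfold esum
  apply Finset.sum_congr rfl
  intro j hj
  have hj' : j ≠ Fin.last n := fun hc => hT (hc ▸ hj)
  apply Finset.sum_congr rfl
  intro l hl
  have hlj : l < j := (Finset.mem_filter.1 hl).2
  have hl' : l ≠ Fin.last n := by
    intro hc
    exact absurd (lt_of_lt_of_le (hc ▸ hlj) (Fin.le_last j)) (by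
      rw [hc] at hlj
      exact absurd hlj (not_lt.2 (Fin.le_last j)))
  rw [h j hj', h l hl']

end Esum

section Main

abbrev qF (m : ℕ) : Fin (m+2) := Fin.last (m+1)
abbrev pF (m : ℕ) : Fin (m+2) := (Fin.last m).castSucc

/-- merged degrees -/
def mergeD (m : ℕ) (d : Fin (m+2) → ℤ) : Fin (m+1) → ℤ :=
  fun j => if j = Fin.last m then d (pF m) + d (qF m) else d j.castSucc

/-- merged elements -/
def mergeA {A : Type} [Ring A] (m : ℕ) (a : Fin (m+2) → A) : Fin (m+1) → A :=
  fun j => if j = Fin.last m then a (pF m) * a (qF m) else a j.castSucc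

/-- a single term of the Koszul brace -/
noncomputable def braceTerm {K A : Type} [Field K] [Ring A] [Algebra K A]
    (Δ : A →ₗ[K] A) {k : ℕ} (d : Fin k → ℤ) (a : Fin k → A) (S : Finset (Fin k)) : A :=
  ((-1 : ℤ) ^ (k - S.card) * koszulSignSet d S) • (Δ (prodOn a S) * prodOn a Sᶜ)

variable {K A : Type} [Field K] [Ring A] [Algebra K A] (Δ : A →ₗ[K] A) {m : ℕ}

theorem pF_succAbove_last {m : ℕ} : (pF m).succAbove (Fin.last m) = qF m := by
  rw [Fin.succAbove_of_le_castSucc _ _ (le_refl _), Fin.succ_last]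

theorem pF_succAbove_ne {m : ℕ} {j : Fin (m+1)} (hj : j ≠ Fin.last m) :
    (pF m).succAbove j = j.castSucc := by
  apply Fin.succAbove_of_castSucc_lt
  exact Fin.castSucc_lt_castSucc_iff.2 (Fin.lt_last_iff_ne_last.2 hj)

theorem card_le_succ (T : Finset (Fin (m+1))) : T.card ≤ m + 1 := by
  simpa using Finset.card_le_univ T

theorem coeff_flip (T : Finset (Fin (m+1))) :
    ((-1 : ℤ)) ^ (m + 2 - T.card) = -((-1 : ℤ) ^ (m + 1 - T.card)) := by
  have h := card_le_succ T
  have : m + 2 - T.card = (m + 1 - T.card) + 1 := by omega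
  rw [this, pow_succ]
  ring

theorem esum_mapSA_last {n : ℕ} (d : Fin (n+1) → ℤ) (T : Finset (Fin n)) :
    esum d (mapSA (Fin.last n) T) = esum (d ∘ (Fin.last n).succAbove) T := by
  rw [esum_mapSA]
  rw [Finset.filter_false_of_mem (fun t _ => by
    rw [Fin.succAbove_last]
    exact not_lt.2 (Fin.castSucc_lt_last t).le), Finset.sum_empty, zero_add]

theorem WT1 (d : Fin (m+2) → ℤ) (a : Fin (m+2) → A) (T : Finset (Fin (m+1)))
    (hT : Fin.last m ∈ T) :
    braceTerm Δ d a (insert (qF m) (mapSA (qF m) T))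
      = braceTerm Δ (mergeD m d) (mergeA m a) T := by
  unfold braceTerm
  have hc : (insert (qF m) (mapSA (qF m) T)).card = T.card + 1 := by
    rw [Finset.card_insert_of_notMem (not_mem_mapSA _ _), card_mapSA]
  have hcoeff : ((-1 : ℤ)) ^ (m + 2 - (T.card + 1)) = ((-1 : ℤ)) ^ (m + 1 - T.card) := by
    congr 1
    omega
  have hsign : koszulSignSet d (insert (qF m) (mapSA (qF m) T))
      = koszulSignSet (mergeD m d) T := by
    rw [koszulSignSet_esum, koszulSignSet_esum]
    congr 1
    have e1 := esum_insert_lastSA d T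
    rw [Fin.succAbove_last] at e1
    have e2 := esum_split_last (d ∘ Fin.castSucc) hT
    have e3 := esum_split_last (mergeD m d) hT
    have e4 : esum (mergeD m d) (T.erase (Fin.last m))
        = esum (d ∘ Fin.castSucc) (T.erase (Fin.last m)) :=
      esum_congr_off_last (fun j hj => by simp [mergeD, hj]) (Finset.notMem_erase _ _)
    rw [e1, e3, e4]
    have e5 : ∀ l ∈ Tᶜ, mergeD m d (Fin.last m) * mergeD m d l
        = d (Fin.last m).castSucc * (d ∘ Fin.castSucc) l
          + d (Fin.last (m+1)) * (d ∘ Fin.castSucc) l := by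
      intro l hl
      have hl' : l ≠ Fin.last m := fun hc' => (Finset.mem_compl.1 hl) (hc' ▸ hT)
      simp only [mergeD, if_neg hl', Function.comp_apply, if_true, eq_self_iff_true]
      ring
    rw [Finset.sum_congr rfl e5, Finset.sum_add_distrib, e2]
    simp only [Function.comp]
    ring
  have hp1 : prodOn a (insert (qF m) (mapSA (qF m) T)) = prodOn (mergeA m a) T := by
    rw [prodOn_insert_max (fun y hy => by
      obtain ⟨z, -, rfl⟩ := mem_mapSA.1 hy
      rw [Fin.succAbove_last]
      exact Fin.castSucc_lt_last z)]
    rw [prodOn_mapSA, Fin.succAbove_last]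
    rw [prodOn_split_last _ hT, prodOn_split_last (mergeA m a) hT]
    have : prodOn (a ∘ Fin.castSucc) (T.erase (Fin.last m))
        = prodOn (mergeA m a) (T.erase (Fin.last m)) :=
      prodOn_congr (fun x hx => by
        simp [mergeA, Finset.ne_of_mem_erase hx])
    rw [this, mergeA, if_pos rfl]
    simp only [Function.comp]
    rw [mul_assoc]
  have hp2 : prodOn a ((insert (qF m) (mapSA (qF m) T))ᶜ) = prodOn (mergeA m a) Tᶜ := by
    rw [compl_insert_mapSA, prodOn_mapSA, Fin.succAbove_last]
    exact prodOn_congr (fun x hx => by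
      have hx' : x ≠ Fin.last m := fun hc' => (Finset.mem_compl.1 hx) (hc' ▸ hT)
      simp [mergeA, hx'])
  rw [hc, hcoeff, hsign, hp1, hp2]

theorem WT2 (d : Fin (m+2) → ℤ) (a : Fin (m+2) → A) (T : Finset (Fin (m+1)))
    (hT : Fin.last m ∈ T) :
    braceTerm Δ d a (mapSA (qF m) T)
      = - (braceTerm Δ (d ∘ Fin.castSucc) (a ∘ Fin.castSucc) T * a (qF m)) := by
  unfold braceTerm
  have hsign : koszulSignSet d (mapSA (qF m) T)
      = koszulSignSet (d ∘ Fin.castSucc) T := by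
    rw [koszulSignSet_esum, koszulSignSet_esum]
    congr 1
    rw [esum_mapSA_last, Fin.succAbove_last]
  have hp1 : prodOn a (mapSA (qF m) T) = prodOn (a ∘ Fin.castSucc) T := by
    rw [prodOn_mapSA, Fin.succAbove_last]
  have hp2 : prodOn a ((mapSA (qF m) T)ᶜ)
      = prodOn (a ∘ Fin.castSucc) Tᶜ * a (qF m) := by
    rw [compl_mapSA]
    rw [prodOn_insert_max (fun y hy => by
      obtain ⟨z, -, rfl⟩ := mem_mapSA.1 hy
      rw [Fin.succAbove_last]
      exact Fin.castSucc_lt_last z)]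
    rw [prodOn_mapSA, Fin.succAbove_last]
  rw [card_mapSA, hsign, hp1, hp2, coeff_flip]
  rw [smul_mul_assoc, ← neg_smul]
  congr 1
  · ring
  · rw [mul_assoc]

theorem WT3 (d : Fin (m+2) → ℤ) (a : Fin (m+2) → A) (T : Finset (Fin (m+1)))
    (hT : Fin.last m ∈ T) :
    braceTerm Δ d a (mapSA (pF m) T)
      = - (((d (pF m) * d (qF m)).negOnePow : ℤ) •
          (braceTerm Δ (d ∘ (pF m).succAbove) (a ∘ (pF m).succAbove) T * a (pF m))) := by
  unfold braceTerm
  have hsign : esum d (mapSA (pF m) T)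
      = d (pF m) * d (qF m) + esum (d ∘ (pF m).succAbove) T := by
    rw [esum_mapSA]
    congr 1
    have hfil : T.filter (fun t => pF m < (pF m).succAbove t) = {Fin.last m} := by
      ext t
      rw [Finset.mem_filter, Finset.mem_singleton]
      constructor
      · rintro ⟨htT, hlt⟩
        by_contra hne
        rw [pF_succAbove_ne hne] at hlt
        exact absurd hlt (not_lt.2 (Fin.castSucc_le_castSucc_iff.2
          (Fin.le_last t)))
      · rintro rfl
        refine ⟨hT, ?_⟩
        rw [pF_succAbove_last]
        exact Fin.castSucc_lt_last _
    rw [hfil, Finset.sum_singleton, pF_succAbove_last, mul_comm]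
  have hp1 : prodOn a (mapSA (pF m) T) = prodOn (a ∘ (pF m).succAbove) T :=
    prodOn_mapSA _ _ _
  have hp2 : prodOn a ((mapSA (pF m) T)ᶜ)
      = prodOn (a ∘ (pF m).succAbove) Tᶜ * a (pF m) := by
    rw [compl_mapSA]
    rw [prodOn_insert_max (fun y hy => by
      obtain ⟨z, hz, rfl⟩ := mem_mapSA.1 hy
      have hz' : z ≠ Fin.last m := fun hc => (Finset.mem_compl.1 hz) (hc ▸ hT)
      rw [pF_succAbove_ne hz']
      exact Fin.castSucc_lt_castSucc_iff.2 (Fin.lt_last_iff_ne_last.2 hz'))]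
    rw [prodOn_mapSA]
  rw [card_mapSA, koszulSignSet_esum, koszulSignSet_esum, hsign, hp1, hp2, coeff_flip]
  rw [smul_mul_assoc, smul_smul, ← neg_smul]
  congr 1
  · rw [Int.negOnePow_add]
    push_cast
    ring
  · rw [mul_assoc]

theorem WT4 (d : Fin (m+2) → ℤ) (a : Fin (m+2) → A) (T : Finset (Fin (m+1)))
    (hT : Fin.last m ∉ T)
    (hpq : a (qF m) * a (pF m)
      = ((d (qF m) * d (pF m)).negOnePow : ℤ) • (a (pF m) * a (qF m))) :
    braceTerm Δ d a (mapSA (qF m) T)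
      = braceTerm Δ (mergeD m d) (mergeA m a) T
        - braceTerm Δ (d ∘ Fin.castSucc) (a ∘ Fin.castSucc) T * a (qF m)
        - ((d (pF m) * d (qF m)).negOnePow : ℤ) •
            (braceTerm Δ (d ∘ (pF m).succAbove) (a ∘ (pF m).succAbove) T * a (pF m)) := by
  unfold braceTerm
  have hTc : Fin.last m ∈ Tᶜ := Finset.mem_compl.2 hT
  -- signs
  have hs0 : esum d (mapSA (qF m) T) = esum (d ∘ Fin.castSucc) T := by
    rw [esum_mapSA_last, Fin.succAbove_last]
  have hs1 : esum (mergeD m d) T = esum (d ∘ Fin.castSucc) T :=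
    esum_congr_off_last (fun j hj => by simp [mergeD, hj]) hT
  have hs2 : esum (d ∘ (pF m).succAbove) T = esum (d ∘ Fin.castSucc) T :=
    esum_congr_off_last (fun j hj => by simp [Function.comp, pF_succAbove_ne hj]) hT
  -- products on the front
  have hx0 : prodOn a (mapSA (qF m) T) = prodOn (a ∘ Fin.castSucc) T := by
    rw [prodOn_mapSA, Fin.succAbove_last]
  have hx1 : prodOn (mergeA m a) T = prodOn (a ∘ Fin.castSucc) T :=
    prodOn_congr (fun x hx => by
      have hx' : x ≠ Fin.last m := fun hc => hT (hc ▸ hx)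
      simp [mergeA, hx'])
  have hx2 : prodOn (a ∘ (pF m).succAbove) T = prodOn (a ∘ Fin.castSucc) T :=
    prodOn_congr (fun x hx => by
      have hx' : x ≠ Fin.last m := fun hc => hT (hc ▸ hx)
      simp [Function.comp, pF_succAbove_ne hx'])
  -- products on the back
  set R := prodOn (a ∘ Fin.castSucc) (Tᶜ.erase (Fin.last m)) with hR
  have hy0 : prodOn a ((mapSA (qF m) T)ᶜ) = R * a (pF m) * a (qF m) := by
    rw [compl_mapSA]
    rw [prodOn_insert_max (fun y hy => by
      obtain ⟨z, -, rfl⟩ := mem_mapSA.1 hy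
      rw [Fin.succAbove_last]
      exact Fin.castSucc_lt_last z)]
    rw [prodOn_mapSA, Fin.succAbove_last, prodOn_split_last _ hTc]
    rfl
  have hy1 : prodOn (mergeA m a) Tᶜ = R * (a (pF m) * a (qF m)) := by
    rw [prodOn_split_last _ hTc]
    have : prodOn (mergeA m a) (Tᶜ.erase (Fin.last m)) = R :=
      prodOn_congr (fun x hx => by
        simp [mergeA, Finset.ne_of_mem_erase hx])
    rw [this, mergeA, if_pos rfl]
  have hy2 : prodOn (a ∘ Fin.castSucc) Tᶜ = R * a (pF m) := by
    rw [prodOn_split_last _ hTc]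
    rfl
  have hy3 : prodOn (a ∘ (pF m).succAbove) Tᶜ = R * a (qF m) := by
    rw [prodOn_split_last _ hTc]
    have : prodOn (a ∘ (pF m).succAbove) (Tᶜ.erase (Fin.last m)) = R :=
      prodOn_congr (fun x hx => by
        simp [Function.comp, pF_succAbove_ne (Finset.ne_of_mem_erase hx)])
    rw [this]
    simp [Function.comp, pF_succAbove_last]
  rw [card_mapSA, koszulSignSet_esum, koszulSignSet_esum, koszulSignSet_esum,
    koszulSignSet_esum, hs0, hs1, hs2, hx0, hx1, hx2, hy0, hy1, hy2, hy3, coeff_flip]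
  set c : ℤ := (-1 : ℤ) ^ (m + 1 - T.card) * ((esum (d ∘ Fin.castSucc) T).negOnePow : ℤ) with hc
  set X := Δ (prodOn (a ∘ Fin.castSucc) T) with hX
  -- rewrite the third term using hpq
  have h3 : ((d (pF m) * d (qF m)).negOnePow : ℤ) •
      ((c • (X * (R * a (qF m)))) * a (pF m)) = c • (X * (R * (a (pF m) * a (qF m)))) := by
    rw [smul_mul_assoc, mul_assoc X, mul_assoc R, hpq]
    have collapse : ((d (pF m) * d (qF m)).negOnePow : ℤ) •
        (c • (X * (R * (((d (qF m) * d (pF m)).negOnePow : ℤ) • (a (pF m) * a (qF m))))))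
        = (((d (pF m) * d (qF m)).negOnePow : ℤ) * ((d (qF m) * d (pF m)).negOnePow : ℤ))
            • (c • (X * (R * (a (pF m) * a (qF m))))) := by
      rw [mul_smul_comm, mul_smul_comm, smul_smul, smul_smul, smul_smul]
      ring_nf
    rw [collapse]
    have : (((d (pF m) * d (qF m)).negOnePow : ℤ) * ((d (qF m) * d (pF m)).negOnePow : ℤ)) = 1 := by
      rw [← Units.val_mul, ← Int.negOnePow_add]
      rw [Int.negOnePow_even]
      · rfl
      · exact ⟨d (pF m) * d (qF m), by ring⟩
    rw [this, one_smul]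
  rw [h3]
  simp only [smul_mul_assoc, mul_assoc]
  rw [← sub_smul, ← sub_smul]
  congr 1
  rw [hc]
  ring

theorem preimage_mapSA {n : ℕ} (r : Fin (n+1)) (T : Finset (Fin n)) :
    (mapSA r T).preimage r.succAbove
        ((Fin.succAbove_right_injective (p := r)).injOn) = T := by
  ext t
  rw [Finset.mem_preimage, mapSA_mem]

theorem mapSA_preimage {n : ℕ} (r : Fin (n+1)) (X : Finset (Fin (n+1))) (hr : r ∉ X) :
    mapSA r (X.preimage r.succAbove
      ((Fin.succAbove_right_injective (p := r)).injOn)) = X := by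
  ext x
  rcases eq_or_ne x r with rfl | hx
  · simp [not_mem_mapSA, hr]
  · obtain ⟨y, rfl⟩ := Fin.exists_succAbove_eq hx
    rw [mapSA_mem, Finset.mem_preimage]

theorem full_partition {m : ℕ} {B : Type*} [AddCommMonoid B] (f : Finset (Fin (m+2)) → B) :
    ∑ S : Finset (Fin (m+2)), f S
      = (∑ T ∈ Finset.univ.filter (fun T : Finset (Fin (m+1)) => Fin.last m ∈ T),
          (f (insert (qF m) (mapSA (qF m) T)) + f (mapSA (qF m) T) + f (mapSA (pF m) T)))
        + ∑ T ∈ Finset.univ.filter (fun T : Finset (Fin (m+1)) => Fin.last m ∉ T),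
            f (mapSA (qF m) T) := by
  classical
  have hqcs : (qF m).succAbove = Fin.castSucc := Fin.succAbove_last
  have hplast : (pF m).succAbove (Fin.last m) = qF m := pF_succAbove_last
  -- split by q then by p
  rw [← Finset.sum_filter_add_sum_filter_not Finset.univ (fun S => qF m ∈ S) f]
  rw [← Finset.sum_filter_add_sum_filter_not
      (Finset.univ.filter (fun S => qF m ∈ S)) (fun S => pF m ∈ S) f]
  rw [← Finset.sum_filter_add_sum_filter_not
      (Finset.univ.filter (fun S => qF m ∉ S)) (fun S => pF m ∈ S) f]
  have h1 : ∑ S ∈ (Finset.univ.filter (fun S => qF m ∈ S)).filter (fun S => pF m ∈ S), f S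
      = ∑ T ∈ Finset.univ.filter (fun T : Finset (Fin (m+1)) => Fin.last m ∈ T),
          f (insert (qF m) (mapSA (qF m) T)) := by
    apply Finset.sum_nbij'
      (i := fun S => (S.erase (qF m)).preimage (qF m).succAbove
        ((Fin.succAbove_right_injective (p := qF m)).injOn))
      (j := fun T => insert (qF m) (mapSA (qF m) T))
    · intro S hS
      simp only [Finset.mem_filter, Finset.mem_univ, true_and] at hS ⊢
      rw [Finset.mem_preimage, hqcs]
      exact Finset.mem_erase.2 ⟨Fin.ne_of_lt (Fin.castSucc_lt_last _), hS.2⟩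
    · intro T hT
      simp only [Finset.mem_filter, Finset.mem_univ, true_and] at hT ⊢
      constructor
      · exact Finset.mem_insert_self _ _
      · apply Finset.mem_insert_of_mem
        have : pF m = (qF m).succAbove (Fin.last m) := by rw [hqcs]
        rw [this]
        exact mapSA_mem.2 hT
    · intro S hS
      simp only [Finset.mem_filter, Finset.mem_univ, true_and] at hS
      rw [mapSA_preimage _ _ (Finset.notMem_erase _ _), Finset.insert_erase hS.1]
    · intro T hT
      rw [Finset.erase_insert (not_mem_mapSA _ _), preimage_mapSA]
    · intro S hS
      simp only [Finset.mem_filter, Finset.mem_univ, true_and] at hS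
      rw [mapSA_preimage _ _ (Finset.notMem_erase _ _), Finset.insert_erase hS.1]
  have h2 : ∑ S ∈ (Finset.univ.filter (fun S => qF m ∉ S)).filter (fun S => pF m ∈ S), f S
      = ∑ T ∈ Finset.univ.filter (fun T : Finset (Fin (m+1)) => Fin.last m ∈ T),
          f (mapSA (qF m) T) := by
    apply Finset.sum_nbij'
      (i := fun S => S.preimage (qF m).succAbove
        ((Fin.succAbove_right_injective (p := qF m)).injOn))
      (j := fun T => mapSA (qF m) T)
    · intro S hS
      simp only [Finset.mem_filter, Finset.mem_univ, true_and] at hS ⊢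
      rw [Finset.mem_preimage, hqcs]
      exact hS.2
    · intro T hT
      simp only [Finset.mem_filter, Finset.mem_univ, true_and] at hT ⊢
      refine ⟨not_mem_mapSA _ _, ?_⟩
      have : pF m = (qF m).succAbove (Fin.last m) := by rw [hqcs]
      rw [this]
      exact mapSA_mem.2 hT
    · intro S hS
      simp only [Finset.mem_filter, Finset.mem_univ, true_and] at hS
      exact mapSA_preimage _ _ hS.1
    · intro T hT
      exact preimage_mapSA _ _
    · intro S hS
      simp only [Finset.mem_filter, Finset.mem_univ, true_and] at hS
      rw [mapSA_preimage _ _ hS.1]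
  have h3 : ∑ S ∈ (Finset.univ.filter (fun S => qF m ∈ S)).filter (fun S => pF m ∉ S), f S
      = ∑ T ∈ Finset.univ.filter (fun T : Finset (Fin (m+1)) => Fin.last m ∈ T),
          f (mapSA (pF m) T) := by
    apply Finset.sum_nbij'
      (i := fun S => S.preimage (pF m).succAbove
        ((Fin.succAbove_right_injective (p := pF m)).injOn))
      (j := fun T => mapSA (pF m) T)
    · intro S hS
      simp only [Finset.mem_filter, Finset.mem_univ, true_and] at hS ⊢
      rw [Finset.mem_preimage, hplast]
      exact hS.1
    · intro T hT
      simp only [Finset.mem_filter, Finset.mem_univ, true_and] at hT ⊢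
      constructor
      · rw [← hplast]
        exact mapSA_mem.2 hT
      · exact not_mem_mapSA _ _
    · intro S hS
      simp only [Finset.mem_filter, Finset.mem_univ, true_and] at hS
      exact mapSA_preimage _ _ hS.2
    · intro T hT
      exact preimage_mapSA _ _
    · intro S hS
      simp only [Finset.mem_filter, Finset.mem_univ, true_and] at hS
      rw [mapSA_preimage _ _ hS.2]
  have h4 : ∑ S ∈ (Finset.univ.filter (fun S => qF m ∉ S)).filter (fun S => pF m ∉ S), f S
      = ∑ T ∈ Finset.univ.filter (fun T : Finset (Fin (m+1)) => Fin.last m ∉ T),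
          f (mapSA (qF m) T) := by
    apply Finset.sum_nbij'
      (i := fun S => S.preimage (qF m).succAbove
        ((Fin.succAbove_right_injective (p := qF m)).injOn))
      (j := fun T => mapSA (qF m) T)
    · intro S hS
      simp only [Finset.mem_filter, Finset.mem_univ, true_and] at hS ⊢
      rw [Finset.mem_preimage, hqcs]
      exact hS.2
    · intro T hT
      simp only [Finset.mem_filter, Finset.mem_univ, true_and] at hT ⊢
      refine ⟨not_mem_mapSA _ _, ?_⟩
      intro hc
      obtain ⟨y, hy, hyp⟩ := mem_mapSA.1 hc
      rw [hqcs] at hyp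
      have : y = Fin.last m := Fin.castSucc_injective _ hyp
      exact hT (this ▸ hy)
    · intro S hS
      simp only [Finset.mem_filter, Finset.mem_univ, true_and] at hS
      exact mapSA_preimage _ _ hS.1
    · intro T hT
      exact preimage_mapSA _ _
    · intro S hS
      simp only [Finset.mem_filter, Finset.mem_univ, true_and] at hS
      rw [mapSA_preimage _ _ hS.1]
  rw [h1, h2, h3, h4]
  simp only [Finset.sum_add_distrib]
  abel

theorem brace_full {k : ℕ} (d : Fin k → ℤ) (a : Fin k → A) :
    ∑ S : Finset (Fin k), braceTerm Δ d a S
      = koszulBrace Δ d a + braceTerm Δ d a ∅ := by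
  have hkb : koszulBrace Δ d a
      = ∑ S ∈ Finset.univ.powerset.filter (fun S : Finset (Fin k) => S.Nonempty),
          braceTerm Δ d a S := rfl
  rw [hkb, Finset.powerset_univ]
  rw [← Finset.sum_filter_add_sum_filter_not Finset.univ
    (fun S : Finset (Fin k) => S.Nonempty) (braceTerm Δ d a)]
  congr 1
  have : Finset.univ.filter (fun S : Finset (Fin k) => ¬ S.Nonempty) = {∅} := by
    ext S
    simp [Finset.not_nonempty_iff_eq_empty]
  rw [this, Finset.sum_singleton]

theorem koszulBrace_rec (m : ℕ) (d : Fin (m+2) → ℤ) (a : Fin (m+2) → A)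
    (hpq : a (qF m) * a (pF m)
      = ((d (qF m) * d (pF m)).negOnePow : ℤ) • (a (pF m) * a (qF m))) :
    koszulBrace Δ d a
      = koszulBrace Δ (mergeD m d) (mergeA m a)
        - koszulBrace Δ (d ∘ Fin.castSucc) (a ∘ Fin.castSucc) * a (qF m)
        - ((d (pF m) * d (qF m)).negOnePow : ℤ) •
            (koszulBrace Δ (d ∘ (pF m).succAbove) (a ∘ (pF m).succAbove) * a (pF m)) := by
  classical
  set ε : ℤ := ((d (pF m) * d (qF m)).negOnePow : ℤ) with hε
  set g : Finset (Fin (m+1)) → A := fun T =>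
    braceTerm Δ (mergeD m d) (mergeA m a) T
      - braceTerm Δ (d ∘ Fin.castSucc) (a ∘ Fin.castSucc) T * a (qF m)
      - ε • (braceTerm Δ (d ∘ (pF m).succAbove) (a ∘ (pF m).succAbove) T * a (pF m))
    with hg
  have hfull : ∑ S : Finset (Fin (m+2)), braceTerm Δ d a S
      = ∑ T : Finset (Fin (m+1)), g T := by
    rw [full_partition (braceTerm Δ d a)]
    have hin : ∀ T ∈ Finset.univ.filter (fun T : Finset (Fin (m+1)) => Fin.last m ∈ T),
        braceTerm Δ d a (insert (qF m) (mapSA (qF m) T))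
          + braceTerm Δ d a (mapSA (qF m) T)
          + braceTerm Δ d a (mapSA (pF m) T) = g T := by
      intro T hT
      rw [Finset.mem_filter] at hT
      rw [WT1 Δ d a T hT.2, WT2 Δ d a T hT.2, WT3 Δ d a T hT.2, hg]
      simp only
      rw [hε]
      abel
    have hout : ∀ T ∈ Finset.univ.filter (fun T : Finset (Fin (m+1)) => Fin.last m ∉ T),
        braceTerm Δ d a (mapSA (qF m) T) = g T := by
      intro T hT
      rw [Finset.mem_filter] at hT
      exact WT4 Δ d a T hT.2 hpq
    rw [Finset.sum_congr rfl hin, Finset.sum_congr rfl hout]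
    exact Finset.sum_filter_add_sum_filter_not _ _ _
  have hsplit : ∑ T : Finset (Fin (m+1)), g T
      = (∑ T : Finset (Fin (m+1)), braceTerm Δ (mergeD m d) (mergeA m a) T)
        - (∑ T : Finset (Fin (m+1)),
            braceTerm Δ (d ∘ Fin.castSucc) (a ∘ Fin.castSucc) T) * a (qF m)
        - ε • ((∑ T : Finset (Fin (m+1)),
            braceTerm Δ (d ∘ (pF m).succAbove) (a ∘ (pF m).succAbove) T) * a (pF m)) := by
    rw [hg]
    simp only [Finset.sum_sub_distrib]
    rw [← Finset.sum_mul, ← Finset.smul_sum, ← Finset.sum_mul]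
  have hW4e : braceTerm Δ d a ∅
      = braceTerm Δ (mergeD m d) (mergeA m a) ∅
        - braceTerm Δ (d ∘ Fin.castSucc) (a ∘ Fin.castSucc) ∅ * a (qF m)
        - ε • (braceTerm Δ (d ∘ (pF m).succAbove) (a ∘ (pF m).succAbove) ∅ * a (pF m)) := by
    have h0 := WT4 Δ d a ∅ (by simp) hpq
    rw [show mapSA (qF m) (∅ : Finset (Fin (m+1))) = ∅ from Finset.map_empty _] at h0
    rw [h0, hε]
  rw [hsplit] at hfull
  rw [brace_full, brace_full, brace_full, brace_full] at hfull
  rw [add_mul, add_mul, smul_add] at hfull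
  have key : koszulBrace Δ d a
      = (koszulBrace Δ d a + braceTerm Δ d a ∅) - braceTerm Δ d a ∅ := by abel
  rw [key, hfull, hW4e]
  abel

end Main


theorem koszulBrace_hereditary
    (K : Type) [Field K] [CharZero K]
    (A : Type) [Ring A] [Algebra K A]
    (𝒜 : ℤ → Submodule K A) [GradedAlgebra 𝒜]
    (hcomm : ∀ (i j : ℤ) (a b : A), a ∈ 𝒜 i → b ∈ 𝒜 j →
      a * b = ((i * j).negOnePow : ℤ) • (b * a))
    (Δ : A →ₗ[K] A)
    (hΔ : ∀ (i : ℤ) (x : A), x ∈ 𝒜 i → Δ x ∈ 𝒜 (i + 1))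
    (k : ℕ) (hk : 1 ≤ k)
    (h : ∀ (d : Fin k → ℤ) (a : Fin k → A),
      (∀ j, a j ∈ 𝒜 (d j)) → koszulBrace Δ d a = 0) :
    ∀ (d : Fin (k+1) → ℤ) (a : Fin (k+1) → A),
      (∀ j, a j ∈ 𝒜 (d j)) → koszulBrace Δ d a = 0 := by
  obtain ⟨m, rfl⟩ : ∃ m, k = m + 1 := ⟨k - 1, by omega⟩
  intro d a ha
  have hpq : a (qF m) * a (pF m)
      = ((d (qF m) * d (pF m)).negOnePow : ℤ) • (a (pF m) * a (qF m)) :=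
    hcomm _ _ _ _ (ha _) (ha _)
  rw [koszulBrace_rec Δ m d a hpq]
  have h1 : koszulBrace Δ (mergeD m d) (mergeA m a) = 0 := by
    apply h
    intro j
    by_cases hj : j = Fin.last m
    · subst hj
      simp only [mergeA, mergeD, if_pos rfl]
      exact SetLike.mul_mem_graded (ha _) (ha _)
    · simp only [mergeA, mergeD, if_neg hj]
      exact ha _
  have h2 : koszulBrace Δ (d ∘ Fin.castSucc) (a ∘ Fin.castSucc) = 0 :=
    h _ _ (fun j => ha _)
  have h3 : koszulBrace Δ (d ∘ (pF m).succAbove) (a ∘ (pF m).succAbove) = 0 :=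
    h _ _ (fun j => ha _)
  rw [h1, h2, h3]
  simp
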